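/- Let F be a field with more than two elements (F ≠ F₂), let n ≥ 3, and let i, j, k be distinct indices in {1,…,n}. Then for every t ∈ F, the matrix Ξ_{i,k}(t) belongs to the subgroup of GL_{2n}(F) generated by the matrices Ξ_{i,j}(s), Ξ_j(s), and Ξ_{j,k}(s) for s ∈ F. -/

import Mathlib

open Module

/-- The generator `Ξ_j(t) = [[I, t E_{j,j}], [0, I]]` of the electrical linear group,
corresponding to adjoining a boundary spike at vertex `j`. -/
def XiD {F : Type*} [Field F] {n : ℕ} (j : Fin n) (t : F) :
    Matrix (Fin n ⊕ Fin n) (Fin n ⊕ Fin n) F :=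
  Matrix.fromBlocks 1 (Matrix.single j j t) 0 1

/-- The generator `Ξ_{i,j}(t) = [[I, 0], [t(E_{i,i} − E_{i,j} − E_{j,i} + E_{j,j}), I]]`
of the electrical linear group, corresponding to adjoining a boundary edge from `i` to `j`. -/
def XiOff {F : Type*} [Field F] {n : ℕ} (i j : Fin n) (t : F) :
    Matrix (Fin n ⊕ Fin n) (Fin n ⊕ Fin n) F :=
  Matrix.fromBlocks 1 0
    (t • (Matrix.single i i (1 : F) - Matrix.single i j 1
      - Matrix.single j i 1 + Matrix.single j j 1)) 1

/-- The generating set of the electrical linear group inside `GL_{2n}(F)`. -/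
def ELGen (F : Type*) [Field F] (n : ℕ) :
    Set ((Matrix (Fin n ⊕ Fin n) (Fin n ⊕ Fin n) F)ˣ) :=
  {A | (∃ j t, (A : Matrix (Fin n ⊕ Fin n) (Fin n ⊕ Fin n) F) = XiD j t) ∨
       (∃ i j t, i ≠ j ∧ (A : Matrix (Fin n ⊕ Fin n) (Fin n ⊕ Fin n) F) = XiOff i j t)}

/-- The electrical linear group `EL_n(F)`: the subgroup of `GL_{2n}(F)` generated by all
the matrices `Ξ_j(t)` and `Ξ_{i,j}(t)`. -/
def EL (F : Type*) [Field F] (n : ℕ) :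
    Subgroup ((Matrix (Fin n ⊕ Fin n) (Fin n ⊕ Fin n) F)ˣ) :=
  Subgroup.closure (ELGen F n)


set_option maxHeartbeats 2000000 in
set_option maxRecDepth 20000 in
private lemma XiD_mul' {F : Type*} [Field F] {n : ℕ} (j : Fin n) (t u : F) :
    XiD j t * XiD j u = XiD j (t + u) := by
  unfold XiD
  rw [Matrix.fromBlocks_multiply]
  simp [Matrix.single_add, add_comm]

private lemma XiD_zero' {F : Type*} [Field F] {n : ℕ} (j : Fin n) :
    XiD j (0 : F) = 1 := by
  simp [XiD, Matrix.fromBlocks_one]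

private lemma XiOff_mul' {F : Type*} [Field F] {n : ℕ} (i j : Fin n) (t u : F) :
    XiOff i j t * XiOff i j u = XiOff i j (t + u) := by
  unfold XiOff
  rw [Matrix.fromBlocks_multiply]
  simp [add_smul]
  abel

private lemma XiOff_zero' {F : Type*} [Field F] {n : ℕ} (i j : Fin n) :
    XiOff i j (0 : F) = 1 := by
  simp [XiOff, Matrix.fromBlocks_one]

/-- `XiD j t` as a unit. -/
def udD {F : Type*} [Field F] {n : ℕ} (j : Fin n) (t : F) :
    (Matrix (Fin n ⊕ Fin n) (Fin n ⊕ Fin n) F)ˣ :=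
  ⟨XiD j t, XiD j (-t),
    by rw [XiD_mul', add_neg_cancel, XiD_zero'],
    by rw [XiD_mul', neg_add_cancel, XiD_zero']⟩

/-- `XiOff i j t` as a unit. -/
def udOff {F : Type*} [Field F] {n : ℕ} (i j : Fin n) (t : F) :
    (Matrix (Fin n ⊕ Fin n) (Fin n ⊕ Fin n) F)ˣ :=
  ⟨XiOff i j t, XiOff i j (-t),
    by rw [XiOff_mul', add_neg_cancel, XiOff_zero'],
    by rw [XiOff_mul', neg_add_cancel, XiOff_zero']⟩

@[simp] lemma udD_val {F : Type*} [Field F] {n : ℕ} (j : Fin n) (t : F) :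
    ((udD j t : (Matrix (Fin n ⊕ Fin n) (Fin n ⊕ Fin n) F)ˣ) :
      Matrix (Fin n ⊕ Fin n) (Fin n ⊕ Fin n) F) = XiD j t := rfl

@[simp] lemma udOff_val {F : Type*} [Field F] {n : ℕ} (i j : Fin n) (t : F) :
    ((udOff i j t : (Matrix (Fin n ⊕ Fin n) (Fin n ⊕ Fin n) F)ˣ) :
      Matrix (Fin n ⊕ Fin n) (Fin n ⊕ Fin n) F) = XiOff i j t := rfl

set_option maxHeartbeats 2000000 in
set_option maxRecDepth 20000 in
private lemma conj' {F : Type*} [Field F] {n : ℕ} (i j k : Fin n)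
    (hij : i ≠ j) (hjk : j ≠ k) (hik : i ≠ k) (a s : F) (ha : a ≠ 0) :
    XiOff i j a⁻¹ * XiD j (-a) * XiOff j k s * XiD j a * XiOff i j (-a⁻¹) =
    Matrix.fromBlocks
      (1 - (s*a) • (Matrix.single j i 1 - Matrix.single j k 1))
      (-(s*a^2) • Matrix.single j j 1)
      (s • (Matrix.single i i (1:F) - Matrix.single i k 1
        - Matrix.single k i 1 + Matrix.single k k 1))
      (1 + (s*a) • (Matrix.single i j 1 - Matrix.single k j 1)) := by
  have hji := hij.symm
  have hkj := hjk.symm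
  have hki := hik.symm
  unfold XiD XiOff
  simp only [Matrix.fromBlocks_multiply]
  rw [Matrix.fromBlocks_inj]
  refine ⟨?_, ?_, ?_, ?_⟩ <;>
  · simp (config := { maxSteps := 10000000 }) only
      [Matrix.mul_one, Matrix.one_mul, Matrix.zero_mul, Matrix.mul_zero, add_zero, zero_add,
      smul_mul_assoc, mul_smul_comm, sub_mul, mul_sub, add_mul, mul_add, mul_assoc,
      neg_mul, mul_neg, neg_smul, neg_neg, neg_add, neg_sub,
      Matrix.single_mul_single_same, Matrix.single_mul_single_of_ne,
      hij, hjk, hik, hji, hkj, hki, ne_eq, not_false_eq_true,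
      mul_one, one_mul, smul_zero, sub_zero, zero_sub, add_zero, zero_add, smul_neg,
      smul_smul, smul_sub, smul_add, mul_zero, zero_mul]
    ext p q
    simp only [Matrix.single, Matrix.smul_apply, Matrix.add_apply, Matrix.sub_apply,
      Matrix.neg_apply, Matrix.one_apply, Matrix.of_apply, smul_eq_mul, Matrix.zero_apply]
    split_ifs <;>
      (try simp_all) <;>
      (try field_simp) <;>
      (try ring) <;>
      (try tauto)

set_option maxHeartbeats 2000000 in
set_option maxRecDepth 20000 in
private lemma total' {F : Type*} [Field F] {n : ℕ} (i j k : Fin n)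
    (hij : i ≠ j) (hjk : j ≠ k) (hik : i ≠ k) (t x : F) (hx0 : x ≠ 0) (hx1 : x - 1 ≠ 0) :
    (XiOff i j 1⁻¹ * XiD j (-1) * XiOff j k (t*x/(x-1)) * XiD j 1 * XiOff i j (-1⁻¹)) *
    (XiOff i j x⁻¹ * XiD j (-x) * XiOff j k (-t/(x-1)) * XiD j x * XiOff i j (-x⁻¹)) *
    XiD j (-(t*x)) = XiOff i k t := by
  have hji := hij.symm
  have hkj := hjk.symm
  have hki := hik.symm
  rw [conj' i j k hij hjk hik 1 _ one_ne_zero, conj' i j k hij hjk hik x _ hx0]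
  unfold XiD XiOff
  simp only [Matrix.fromBlocks_multiply]
  rw [Matrix.fromBlocks_inj]
  refine ⟨?_, ?_, ?_, ?_⟩ <;>
  · simp (config := { maxSteps := 10000000 }) only
      [Matrix.mul_one, Matrix.one_mul, Matrix.zero_mul, Matrix.mul_zero, add_zero, zero_add,
      smul_mul_assoc, mul_smul_comm, sub_mul, mul_sub, add_mul, mul_add, mul_assoc,
      neg_mul, mul_neg, neg_smul, neg_neg, neg_add, neg_sub,
      Matrix.single_mul_single_same, Matrix.single_mul_single_of_ne,
      hij, hjk, hik, hji, hkj, hki, ne_eq, not_false_eq_true,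
      mul_one, one_mul, smul_zero, sub_zero, zero_sub, add_zero, zero_add, smul_neg,
      smul_smul, smul_sub, smul_add, mul_zero, zero_mul]
    ext p q
    simp only [Matrix.single, Matrix.smul_apply, Matrix.add_apply, Matrix.sub_apply,
      Matrix.neg_apply, Matrix.one_apply, Matrix.of_apply, smul_eq_mul, Matrix.zero_apply]
    split_ifs <;>
      (try simp_all) <;>
      (try field_simp) <;>
      (try ring) <;>
      (try tauto)

/-- For `F ≠ F₂`, `n ≥ 3`, and distinct indices `i, j, k`, the generator `Ξ_{i,k}(t)` lies
in the subgroup of `GL_{2n}(F)` generated by the matrices `Ξ_{i,j}(s)`, `Ξ_j(s)`,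
and `Ξ_{j,k}(s)` for `s ∈ F`. -/
theorem stmt12 {F : Type*} [Field F] {n : ℕ} (hn : 3 ≤ n)
    (hF : ∃ x : F, x ≠ 0 ∧ x ≠ 1)
    (i j k : Fin n) (hij : i ≠ j) (hjk : j ≠ k) (hik : i ≠ k) (t : F) :
    ∃ A ∈ Subgroup.closure
        {A : (Matrix (Fin n ⊕ Fin n) (Fin n ⊕ Fin n) F)ˣ |
          (∃ s, (A : Matrix (Fin n ⊕ Fin n) (Fin n ⊕ Fin n) F) = XiOff i j s) ∨
          (∃ s, (A : Matrix (Fin n ⊕ Fin n) (Fin n ⊕ Fin n) F) = XiD j s) ∨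
          (∃ s, (A : Matrix (Fin n ⊕ Fin n) (Fin n ⊕ Fin n) F) = XiOff j k s)},
      (A : Matrix (Fin n ⊕ Fin n) (Fin n ⊕ Fin n) F) = XiOff i k t := by
  obtain ⟨x, hx0, hx1⟩ := hF
  have hx1' : x - 1 ≠ 0 := sub_ne_zero.mpr hx1
  refine ⟨(udOff i j 1⁻¹ * udD j (-1) * udOff j k (t*x/(x-1)) * udD j 1 * udOff i j (-1⁻¹)) *
    (udOff i j x⁻¹ * udD j (-x) * udOff j k (-t/(x-1)) * udD j x * udOff i j (-x⁻¹)) *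
    udD j (-(t*x)), ?_, ?_⟩
  · have h1 : ∀ c : F, (udOff i j c : (Matrix (Fin n ⊕ Fin n) (Fin n ⊕ Fin n) F)ˣ) ∈
        Subgroup.closure {A : (Matrix (Fin n ⊕ Fin n) (Fin n ⊕ Fin n) F)ˣ |
          (∃ s, (A : Matrix (Fin n ⊕ Fin n) (Fin n ⊕ Fin n) F) = XiOff i j s) ∨
          (∃ s, (A : Matrix (Fin n ⊕ Fin n) (Fin n ⊕ Fin n) F) = XiD j s) ∨
          (∃ s, (A : Matrix (Fin n ⊕ Fin n) (Fin n ⊕ Fin n) F) = XiOff j k s)} :=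
      fun c => Subgroup.subset_closure (Or.inl ⟨c, rfl⟩)
    have h2 : ∀ c : F, (udD j c : (Matrix (Fin n ⊕ Fin n) (Fin n ⊕ Fin n) F)ˣ) ∈
        Subgroup.closure {A : (Matrix (Fin n ⊕ Fin n) (Fin n ⊕ Fin n) F)ˣ |
          (∃ s, (A : Matrix (Fin n ⊕ Fin n) (Fin n ⊕ Fin n) F) = XiOff i j s) ∨
          (∃ s, (A : Matrix (Fin n ⊕ Fin n) (Fin n ⊕ Fin n) F) = XiD j s) ∨
          (∃ s, (A : Matrix (Fin n ⊕ Fin n) (Fin n ⊕ Fin n) F) = XiOff j k s)} :=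
      fun c => Subgroup.subset_closure (Or.inr (Or.inl ⟨c, rfl⟩))
    have h3 : ∀ c : F, (udOff j k c : (Matrix (Fin n ⊕ Fin n) (Fin n ⊕ Fin n) F)ˣ) ∈
        Subgroup.closure {A : (Matrix (Fin n ⊕ Fin n) (Fin n ⊕ Fin n) F)ˣ |
          (∃ s, (A : Matrix (Fin n ⊕ Fin n) (Fin n ⊕ Fin n) F) = XiOff i j s) ∨
          (∃ s, (A : Matrix (Fin n ⊕ Fin n) (Fin n ⊕ Fin n) F) = XiD j s) ∨
          (∃ s, (A : Matrix (Fin n ⊕ Fin n) (Fin n ⊕ Fin n) F) = XiOff j k s)} :=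
      fun c => Subgroup.subset_closure (Or.inr (Or.inr ⟨c, rfl⟩))
    exact mul_mem (mul_mem
      (mul_mem (mul_mem (mul_mem (mul_mem (h1 _) (h2 _)) (h3 _)) (h2 _)) (h1 _))
      (mul_mem (mul_mem (mul_mem (mul_mem (h1 _) (h2 _)) (h3 _)) (h2 _)) (h1 _))) (h2 _)
  · simp only [Units.val_mul, udD_val, udOff_val]
    exact total' i j k hij hjk hik t x hx0 hx1'
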